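/- For any schedule π, err(π) = Σ_{(j,j') : μ_j > μ_{j'}} (μ_j − μ_{j'})·1{π(j) < π(j')}, where the sum is over all ordered pairs of jobs (j, j') with μ_j > μ_{j'} and 1{π(j) < π(j')} is the indicator that π schedules job j before job j'. -/

import Mathlib

/-- Error decomposition: for any schedule `π`, the excess expected total completion
time over the optimum equals the sum of `μ_j − μ_{j'}` over all inverted pairs, i.e.
pairs `(j, j')` with `μ_j > μ_{j'}` scheduled with `π(j) < π(j')`. -/
theorem error_decomposition
    (n : ℕ) (hn : 1 ≤ n) (μ : Fin n → ℝ) (hμ : ∀ j, μ j ∈ Set.Icc (0 : ℝ) 1)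
    (cost : Equiv.Perm (Fin n) → ℝ)
    (hcost : ∀ π : Equiv.Perm (Fin n), cost π = ∑ j, ((n : ℝ) - (π j : ℕ)) * μ j)
    (OPT : ℝ)
    (hOPT : OPT = Finset.univ.inf' Finset.univ_nonempty cost)
    (π : Equiv.Perm (Fin n)) :
    cost π - OPT =
      ∑ j : Fin n, ∑ j' : Fin n,
        if μ j' < μ j ∧ π j < π j' then μ j - μ j' else 0 := by
  classical
  set F : Equiv.Perm (Fin n) → ℝ := fun ρ => ∑ j : Fin n, ∑ j' : Fin n,
      if μ j' < μ j ∧ ρ j < ρ j' then μ j - μ j' else 0 with hF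
  -- pairwise helper
  set h : Equiv.Perm (Fin n) → Fin n → Fin n → ℝ := fun ρ j j' =>
      (if ρ j < ρ j' then μ j else 0) -
      (if μ j' < μ j ∧ ρ j < ρ j' then μ j - μ j' else 0) with hh
  -- cost in terms of pairwise sums
  have hcost' : ∀ ρ : Equiv.Perm (Fin n),
      cost ρ = (∑ j, μ j) + ∑ j : Fin n, ∑ j' : Fin n,
        (if ρ j < ρ j' then μ j else 0) := by
    intro ρ
    rw [hcost, ← Finset.sum_add_distrib]
    refine Finset.sum_congr rfl fun j _ => ?_
    have hsum : (∑ j' : Fin n, if ρ j < ρ j' then μ j else 0)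
        = ((Finset.univ.filter (fun j' : Fin n => ρ j < ρ j')).card : ℝ) * μ j := by
      rw [← Finset.sum_filter, Finset.sum_const, nsmul_eq_mul]
    have hcard : (Finset.univ.filter (fun j' : Fin n => ρ j < ρ j')).card
        = n - 1 - (ρ j : ℕ) := by
      have h1 : (Finset.univ.filter (fun j' : Fin n => ρ j < ρ j')).card
          = (Finset.univ.filter (fun k : Fin n => ρ j < k)).card := by
        rw [← Fintype.card_subtype, ← Fintype.card_subtype]
        exact Fintype.card_congr (ρ.subtypeEquiv fun a => Iff.rfl)
      have h2 : Finset.univ.filter (fun k : Fin n => ρ j < k) = Finset.Ioi (ρ j) := by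
        ext k; simp
      rw [h1, h2, Fin.card_Ioi]
    have hlt : (ρ j : ℕ) < n := (ρ j).is_lt
    rw [hsum, hcard]
    have : ((n - 1 - (ρ j : ℕ) : ℕ) : ℝ) = (n : ℝ) - 1 - (ρ j : ℕ) := by
      push_cast [Nat.cast_sub (by omega : (ρ j : ℕ) ≤ n - 1), Nat.cast_sub hn]
      ring
    rw [this]; ring
  -- pointwise symmetrization
  have hpt : ∀ (ρ : Equiv.Perm (Fin n)) (j j' : Fin n),
      h ρ j j' + h ρ j' j = if j = j' then 0 else min (μ j) (μ j') := by
    intro ρ j j'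
    by_cases hjj : j = j'
    · subst hjj; simp [hh]
    · have hne : ρ j ≠ ρ j' := fun e => hjj (ρ.injective e)
      rw [if_neg hjj]
      rcases hne.lt_or_gt with hlt | hlt
      · have hnlt : ¬ ρ j' < ρ j := not_lt_of_gt hlt
        simp only [hh, if_pos hlt, if_neg hnlt,
          if_neg (fun c => hnlt c.2 : ¬ (μ j < μ j' ∧ ρ j' < ρ j))]
        by_cases hm : μ j' < μ j
        · rw [if_pos ⟨hm, hlt⟩, min_eq_right hm.le]; ring
        · rw [if_neg (fun c => hm c.1), min_eq_left (not_lt.1 hm)]; ring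
      · have hnlt : ¬ ρ j < ρ j' := not_lt_of_gt hlt
        simp only [hh, if_pos hlt, if_neg hnlt,
          if_neg (fun c => hnlt c.2 : ¬ (μ j' < μ j ∧ ρ j < ρ j'))]
        by_cases hm : μ j < μ j'
        · rw [if_pos ⟨hm, hlt⟩, min_eq_left hm.le]; ring
        · rw [if_neg (fun c => hm c.1), min_eq_right (not_lt.1 hm)]; ring
  -- cost ρ - F ρ is constant in ρ
  have hconst : ∀ ρ σ : Equiv.Perm (Fin n), cost ρ - F ρ = cost σ - F σ := by
    intro ρ σ
    have key : ∀ τ : Equiv.Perm (Fin n),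
        2 * (∑ j : Fin n, ∑ j' : Fin n, h τ j j')
        = ∑ j : Fin n, ∑ j' : Fin n, (if j = j' then 0 else min (μ j) (μ j')) := by
      intro τ
      have hswap : (∑ j : Fin n, ∑ j' : Fin n, h τ j j')
          = ∑ j : Fin n, ∑ j' : Fin n, h τ j' j := Finset.sum_comm
      calc 2 * (∑ j : Fin n, ∑ j' : Fin n, h τ j j')
          = (∑ j : Fin n, ∑ j' : Fin n, h τ j j')
            + (∑ j : Fin n, ∑ j' : Fin n, h τ j' j) := by rw [← hswap]; ring
        _ = ∑ j : Fin n, ∑ j' : Fin n, (h τ j j' + h τ j' j) := by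
            rw [← Finset.sum_add_distrib]
            exact Finset.sum_congr rfl fun j _ => (Finset.sum_add_distrib).symm
        _ = _ := Finset.sum_congr rfl fun j _ => Finset.sum_congr rfl fun j' _ => hpt τ j j'
    have hFrep : ∀ τ : Equiv.Perm (Fin n),
        cost τ - F τ = (∑ j, μ j) + ∑ j : Fin n, ∑ j' : Fin n, h τ j j' := by
      intro τ
      rw [hcost' τ, hF]
      simp only [hh, Finset.sum_sub_distrib]
      ring
    rw [hFrep ρ, hFrep σ]
    have heq : (∑ j : Fin n, ∑ j' : Fin n, h ρ j j')
        = ∑ j : Fin n, ∑ j' : Fin n, h σ j j' := by linarith [key ρ, key σ]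
    rw [heq]
  -- a schedule with no inversions
  set σ₀ : Equiv.Perm (Fin n) := (Tuple.sort μ)⁻¹ with hσ₀
  have hF0 : F σ₀ = 0 := by
    rw [hF]
    refine Finset.sum_eq_zero fun j _ => Finset.sum_eq_zero fun j' _ => ?_
    rw [if_neg]
    rintro ⟨hμlt, hρlt⟩
    have hm : μ (Tuple.sort μ (σ₀ j)) ≤ μ (Tuple.sort μ (σ₀ j')) :=
      Tuple.monotone_sort μ (le_of_lt hρlt)
    simp only [hσ₀] at hm
    rw [Equiv.Perm.coe_inv, Equiv.apply_symm_apply, Equiv.apply_symm_apply] at hm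
    linarith
  have hFnonneg : ∀ ρ : Equiv.Perm (Fin n), 0 ≤ F ρ := by
    intro ρ
    refine Finset.sum_nonneg fun j _ => Finset.sum_nonneg fun j' _ => ?_
    split_ifs with hc
    · linarith [hc.1]
    · exact le_refl 0
  have hOPTeq : OPT = cost σ₀ := by
    rw [hOPT]
    refine le_antisymm (Finset.inf'_le _ (Finset.mem_univ σ₀)) ?_
    refine Finset.le_inf' _ _ fun ρ _ => ?_
    have := hconst σ₀ ρ
    have := hFnonneg ρ
    linarith [hF0]
  show cost π - OPT = F π
  rw [hOPTeq]
  linarith [hconst π σ₀, hF0]
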